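/- Integration by parts for complex Gaussian variables: let Z be a complex Gaussian random variable with parameter ρ > 0, and let f : ℂ → ℂ be continuously differentiable (as a map ℝ² → ℝ²) with f and its derivative bounded. Then E[conj(Z) · f(Z)] = ρ · E[(∂f/∂z)(Z)]. -/

import Mathlib

open MeasureTheory ProbabilityTheory Complex Finset
open scoped NNReal ENNReal

/-- Wirtinger derivative `∂f/∂z = (1/2)(∂f/∂x − i ∂f/∂y)`. -/
noncomputable def wirtingerDeriv (f : ℂ → ℂ) (z : ℂ) : ℂ :=
  (fderiv ℝ f z 1 - Complex.I * fderiv ℝ f z Complex.I) / 2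

/-- Conjugate Wirtinger derivative `∂f/∂z̄ = (1/2)(∂f/∂x + i ∂f/∂y)`. -/
noncomputable def wirtingerDerivBar (f : ℂ → ℂ) (z : ℂ) : ℂ :=
  (fderiv ℝ f z 1 + Complex.I * fderiv ℝ f z Complex.I) / 2

/-- Law of a complex Gaussian variable with parameter `ρ`: the law of `Z = X + iY` where
`X, Y` are independent real centered Gaussian variables of mean `0` and variance `ρ/2`. -/
noncomputable def complexGaussian (ρ : ℝ) : Measure ℂ :=
  ((gaussianReal 0 (ρ/2).toNNReal).prod (gaussianReal 0 (ρ/2).toNNReal)).map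
    (fun p => (p.1 : ℂ) + (p.2 : ℂ) * Complex.I)


lemma gauss_withDensity (v : ℝ≥0) (hv : v ≠ 0) :
    gaussianReal 0 v
      = volume.withDensity (fun x => ((gaussianPDFReal 0 v x).toNNReal : ℝ≥0∞)) := by
  rw [gaussianReal_of_var_ne_zero 0 hv]
  rfl

lemma integral_gauss (v : ℝ≥0) (hv : v ≠ 0) {E : Type*} [NormedAddCommGroup E] [NormedSpace ℝ E] (g : ℝ → E) :
    ∫ x, g x ∂(gaussianReal 0 v) = ∫ x, gaussianPDFReal 0 v x • g x := by
  rw [gauss_withDensity v hv,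
    integral_withDensity_eq_integral_smul
      ((measurable_gaussianPDFReal 0 v).real_toNNReal) g]
  congr 1; ext x
  rw [NNReal.smul_def, Real.coe_toNNReal _ (gaussianPDFReal_nonneg 0 v x)]

lemma integrable_gauss_iff (v : ℝ≥0) (hv : v ≠ 0) {E : Type*} [NormedAddCommGroup E] [NormedSpace ℝ E] (g : ℝ → E) :
    Integrable g (gaussianReal 0 v)
      ↔ Integrable (fun x => gaussianPDFReal 0 v x • g x) volume := by
  rw [gauss_withDensity v hv,
    integrable_withDensity_iff_integrable_smul
      ((measurable_gaussianPDFReal 0 v).real_toNNReal)]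
  constructor <;> intro h <;> refine h.congr (Filter.Eventually.of_forall fun x => ?_) <;>
    simp only [NNReal.smul_def, Real.coe_toNNReal _ (gaussianPDFReal_nonneg 0 v x)]

lemma ibp1 (v : ℝ) (hv : 0 < v) (g : ℝ → ℂ) (hg : ContDiff ℝ 1 g) (C : ℝ)
    (hb : ∀ x, ‖g x‖ ≤ C) (hd : ∀ x, ‖deriv g x‖ ≤ C) :
    ∫ x, (x : ℂ) * g x ∂(gaussianReal 0 v.toNNReal)
      = (v : ℂ) * ∫ x, deriv g x ∂(gaussianReal 0 v.toNNReal) := by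
  have hC : 0 ≤ C := le_trans (norm_nonneg _) (hb 0)
  have hv' : v.toNNReal ≠ 0 := (Real.toNNReal_pos.mpr hv).ne'
  set b : ℝ := (2 * v)⁻¹ with hbdef
  have hbpos : 0 < b := by positivity
  set e : ℝ → ℝ := fun x => Real.exp (-x ^ 2 / (2 * v)) with hedef
  have he_eq : ∀ x, e x = Real.exp (-b * x ^ 2) := by
    intro x; simp only [hedef, hbdef]; ring_nf
  have he_cont : Continuous e := by
    apply Real.continuous_exp.comp; continuity
  have hgc : Continuous g := hg.continuous
  have hgc' : Continuous (deriv g) := hg.continuous_deriv le_rfl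
  have he_pos : ∀ x, 0 < e x := fun x => Real.exp_pos _
  -- derivative of F = e • g
  have hF : ∀ x : ℝ, HasDerivAt (fun x => e x • g x)
      ((-(x / v) * e x) • g x + e x • deriv g x) x := by
    intro x
    have h1 : HasDerivAt (fun x : ℝ => -x ^ 2 / (2 * v)) (-(x / v)) x := by
      have := ((hasDerivAt_pow 2 x).neg.div_const (2 * v))
      convert this using 1
      · rfl
      · rfl
      · rfl
      · field_simp
        ring
    have h2 : HasDerivAt e (e x * -(x / v)) x := h1.exp
    have h3 : HasDerivAt g (deriv g x) x :=
      ((hg.differentiable one_ne_zero) x).hasDerivAt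
    have := h2.smul h3
    refine this.congr_deriv ?_
    rw [add_comm]
    congr 1
    rw [mul_comm]
  -- integrability of the two pieces
  have hint1 : Integrable (fun x => (-(x / v) * e x) • g x) := by
    refine Integrable.mono' (g := fun x => (C / v) * |x * Real.exp (-b * x ^ 2)|)
      (((integrable_mul_exp_neg_mul_sq hbpos).abs.const_mul _))
      (((((continuous_id.div_const v).neg).mul he_cont).smul hgc).aestronglyMeasurable)
      (Filter.Eventually.of_forall fun x => ?_)
    rw [norm_smul, he_eq x, Real.norm_eq_abs]
    simp only [abs_mul, abs_neg, abs_div, abs_of_pos hv, abs_of_pos (Real.exp_pos _)]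
    have h2 : |x| / v * Real.exp (-b * x ^ 2) * ‖g x‖
        ≤ |x| / v * Real.exp (-b * x ^ 2) * C :=
      mul_le_mul_of_nonneg_left (hb x) (by positivity)
    refine h2.trans (le_of_eq ?_); ring
  have hint2 : Integrable (fun x => e x • deriv g x) := by
    refine Integrable.mono' (g := fun x => C * Real.exp (-b * x ^ 2))
      ((integrable_exp_neg_mul_sq hbpos).const_mul _)
      ((he_cont.smul hgc').aestronglyMeasurable)
      (Filter.Eventually.of_forall fun x => ?_)
    rw [norm_smul, he_eq x, Real.norm_eq_abs, abs_of_pos (Real.exp_pos _), mul_comm]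
    exact mul_le_mul_of_nonneg_right (hd x) (le_of_lt (Real.exp_pos _))
  -- limits at infinity
  have htend : ∀ l : Filter ℝ, Filter.Tendsto (fun x : ℝ => x ^ 2) l Filter.atTop →
      Filter.Tendsto (fun x => e x • g x) l (nhds 0) := by
    intro l hl
    have hte : Filter.Tendsto e l (nhds 0) := by
      simp only [hedef]
      apply Real.tendsto_exp_atBot.comp
      apply Filter.Tendsto.atBot_div_const (by linarith)
      exact (Filter.tendsto_neg_atBot_iff.mpr hl)
    have hten : Filter.Tendsto (fun x => C * e x) l (nhds 0) := by
      simpa using hte.const_mul C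
    refine squeeze_zero_norm (fun x => ?_) hten
    rw [norm_smul, Real.norm_eq_abs, abs_of_pos (he_pos x), mul_comm]
    exact mul_le_mul_of_nonneg_right (hb x) (le_of_lt (he_pos x))
  have hsq_top : Filter.Tendsto (fun x : ℝ => x ^ 2) Filter.atTop Filter.atTop :=
    Filter.tendsto_pow_atTop (by norm_num)
  have hsq_bot : Filter.Tendsto (fun x : ℝ => x ^ 2) Filter.atBot Filter.atTop := by
    have := hsq_top.comp Filter.tendsto_neg_atBot_atTop
    simpa [Function.comp_def, neg_sq] using this
  -- FTC on the whole line
  have hzero : ∫ x, ((-(x / v) * e x) • g x + e x • deriv g x) = 0 := by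
    rw [MeasureTheory.integral_of_hasDerivAt_of_tendsto hF (hint1.add hint2)
      (htend _ hsq_bot) (htend _ hsq_top)]
    simp
  rw [MeasureTheory.integral_add hint1 hint2] at hzero
  -- rewrite first integral
  have h1eq : (fun x => (-(x / v) * e x) • g x)
      = fun x => (-v⁻¹) • (x • (e x • g x)) := by
    ext x; rw [smul_smul, smul_smul]; congr 1; field_simp
  rw [h1eq, MeasureTheory.integral_smul] at hzero
  have hkey : ∫ x, x • (e x • g x) = v • ∫ x, e x • deriv g x := by
    have hv0 : v ≠ 0 := hv.ne'
    have := hzero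
    rw [neg_smul, neg_add_eq_zero] at this
    rw [← this, smul_smul]
    rw [mul_inv_cancel₀ hv0, one_smul]
  -- now convert gaussian integrals
  set K : ℝ := (Real.sqrt (2 * Real.pi * v))⁻¹ with hKdef
  have hpdf : ∀ x, gaussianPDFReal 0 v.toNNReal x = K * e x := by
    intro x
    rw [gaussianPDFReal]
    rw [Real.coe_toNNReal _ hv.le]
    simp only [sub_zero, hKdef, hedef]
  rw [integral_gauss _ hv', integral_gauss _ hv']
  have hL : (fun x => gaussianPDFReal 0 v.toNNReal x • ((x : ℂ) * g x))
      = fun x => K • (x • (e x • g x)) := by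
    ext x
    rw [hpdf x, ← Complex.real_smul, smul_smul, smul_smul, smul_smul]
    congr 1; ring
  have hR : (fun x => gaussianPDFReal 0 v.toNNReal x • deriv g x)
      = fun x => K • (e x • deriv g x) := by
    ext x; rw [hpdf x, smul_smul]
  rw [hL, hR, MeasureTheory.integral_smul, MeasureTheory.integral_smul, hkey]
  rw [smul_comm, Complex.real_smul]

lemma integrable_abs_gauss (v : ℝ) (hv : 0 < v) :
    Integrable (fun x : ℝ => |x|) (gaussianReal 0 v.toNNReal) := by
  have hv' : v.toNNReal ≠ 0 := (Real.toNNReal_pos.mpr hv).ne'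
  rw [integrable_gauss_iff _ hv']
  set b : ℝ := (2 * v)⁻¹ with hbdef
  have hbpos : 0 < b := by positivity
  set K : ℝ := (Real.sqrt (2 * Real.pi * v))⁻¹ with hKdef
  have hK : 0 ≤ K := by positivity
  have hpdf : ∀ x : ℝ, gaussianPDFReal 0 v.toNNReal x = K * Real.exp (-b * x ^ 2) := by
    intro x
    rw [gaussianPDFReal, Real.coe_toNNReal _ hv.le]
    simp only [sub_zero, hKdef, hbdef]
    congr 1
    ring_nf
  refine Integrable.mono' (g := fun x => K * |x * Real.exp (-b * x ^ 2)|)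
    ((integrable_mul_exp_neg_mul_sq hbpos).abs.const_mul _)
    (((measurable_gaussianPDFReal 0 v.toNNReal).mul measurable_abs).aestronglyMeasurable)
    (Filter.Eventually.of_forall fun x => ?_)
  simp only [Real.norm_eq_abs, hpdf x, smul_eq_mul, abs_mul, abs_abs,
    _root_.abs_of_nonneg hK, _root_.abs_of_pos (Real.exp_pos _)]
  exact le_of_eq (by ring)


/-- Integration by parts for a complex Gaussian variable `Z` with parameter `ρ > 0`:
`E[conj(Z)·f(Z)] = ρ·E[(∂f/∂z)(Z)]` for `f : ℂ → ℂ` continuously differentiable with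
`f` and its derivative bounded. -/
theorem complex_gaussian_integration_by_parts
    {Ω : Type*} [MeasurableSpace Ω] (P : Measure Ω) [IsProbabilityMeasure P]
    (Z : Ω → ℂ) (hZmeas : Measurable Z) (ρ : ℝ) (hρ : 0 < ρ)
    (hZ : Measure.map Z P = complexGaussian ρ)
    (f : ℂ → ℂ) (hf : ContDiff ℝ 1 f) (C : ℝ)
    (hfb : ∀ z, ‖f z‖ ≤ C) (hfd : ∀ z, ‖fderiv ℝ f z‖ ≤ C) :
    ∫ ω, (starRingEnd ℂ) (Z ω) * f (Z ω) ∂P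
      = (ρ : ℂ) * ∫ ω, wirtingerDeriv f (Z ω) ∂P := by
  have hC : 0 ≤ C := le_trans (norm_nonneg _) (hfb 0)
  have hv : 0 < ρ / 2 := by linarith
  set v : ℝ := ρ / 2 with hvdef
  set G := gaussianReal 0 v.toNNReal with hGdef
  haveI hPG : IsProbabilityMeasure G := by rw [hGdef]; infer_instance
  set φ : ℝ × ℝ → ℂ := fun p => (p.1 : ℂ) + (p.2 : ℂ) * Complex.I with hφdef
  have hφc : Continuous φ := by
    refine Continuous.add (Complex.continuous_ofReal.comp continuous_fst) ?_
    exact (Complex.continuous_ofReal.comp continuous_snd).mul continuous_const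
  have hfc : Continuous f := hf.continuous
  have hfderc : Continuous (fderiv ℝ f) := hf.continuous_fderiv one_ne_zero
  have happ : ∀ w : ℂ, Continuous (fun z => fderiv ℝ f z w) := fun w =>
    (ContinuousLinearMap.apply ℝ ℂ w).continuous.comp hfderc
  have hwc : Continuous (wirtingerDeriv f) := by
    unfold wirtingerDeriv
    exact ((happ 1).sub (continuous_const.mul (happ Complex.I))).div_const 2
  have hconjc : Continuous (fun z : ℂ => (starRingEnd ℂ) z * f z) :=
    continuous_conj.mul hfc
  have hcg : complexGaussian ρ = Measure.map φ (G.prod G) := rfl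
  -- integrabilities over the product
  have habs : Integrable (fun x : ℝ => |x|) G := integrable_abs_gauss v hv
  have hI1 : Integrable (fun p : ℝ × ℝ => (p.1 : ℂ) * f (φ p)) (G.prod G) := by
    refine Integrable.mono' (habs.mul_prod (integrable_const C))
      (((Complex.continuous_ofReal.comp continuous_fst).mul
        (hfc.comp hφc)).aestronglyMeasurable)
      (Filter.Eventually.of_forall fun p => ?_)
    rw [norm_mul, Complex.norm_real, Real.norm_eq_abs]
    exact mul_le_mul_of_nonneg_left (hfb _) (abs_nonneg _)
  have hI2 : Integrable (fun p : ℝ × ℝ => (p.2 : ℂ) * f (φ p)) (G.prod G) := by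
    refine Integrable.mono' ((integrable_const C).mul_prod habs)
      (((Complex.continuous_ofReal.comp continuous_snd).mul
        (hfc.comp hφc)).aestronglyMeasurable)
      (Filter.Eventually.of_forall fun p => ?_)
    rw [norm_mul, Complex.norm_real, Real.norm_eq_abs, mul_comm]
    exact mul_le_mul_of_nonneg_right (hfb _) (abs_nonneg _)
  have hI3 : Integrable (fun p : ℝ × ℝ => fderiv ℝ f (φ p) 1) (G.prod G) := by
    refine Integrable.mono' (integrable_const C)
      (((happ 1).comp hφc).aestronglyMeasurable)
      (Filter.Eventually.of_forall fun p => ?_)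
    refine le_trans ((fderiv ℝ f (φ p)).le_opNorm 1) ?_
    rw [norm_one, mul_one]; exact hfd _
  have hI4 : Integrable (fun p : ℝ × ℝ => fderiv ℝ f (φ p) Complex.I) (G.prod G) := by
    refine Integrable.mono' (integrable_const C)
      (((happ Complex.I).comp hφc).aestronglyMeasurable)
      (Filter.Eventually.of_forall fun p => ?_)
    refine le_trans ((fderiv ℝ f (φ p)).le_opNorm Complex.I) ?_
    rw [Complex.norm_I, mul_one]; exact hfd _
  -- transfer integrals from P to the product measure
  have hmapL : ∫ ω, (starRingEnd ℂ) (Z ω) * f (Z ω) ∂P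
      = ∫ p, ((p.1 : ℂ) - (p.2 : ℂ) * Complex.I) * f (φ p) ∂(G.prod G) := by
    rw [(integral_map hZmeas.aemeasurable hconjc.aestronglyMeasurable).symm.trans (by rw [hZ]),
      hcg, integral_map hφc.aemeasurable hconjc.aestronglyMeasurable]
    refine integral_congr_ae (Filter.Eventually.of_forall fun p => ?_)
    simp only [hφdef, map_add, map_mul, Complex.conj_ofReal, Complex.conj_I]
    ring
  have hmapR : ∫ ω, wirtingerDeriv f (Z ω) ∂P
      = ∫ p, wirtingerDeriv f (φ p) ∂(G.prod G) := by
    rw [(integral_map hZmeas.aemeasurable hwc.aestronglyMeasurable).symm.trans (by rw [hZ]),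
      hcg, integral_map hφc.aemeasurable hwc.aestronglyMeasurable]
  -- inner integration by parts, first coordinate
  have hinner1 : ∀ y : ℝ, ∫ x, (x : ℂ) * f (φ (x, y)) ∂G
      = (v : ℂ) * ∫ x, fderiv ℝ f (φ (x, y)) 1 ∂G := by
    intro y
    set c : ℂ := (y : ℂ) * Complex.I with hcdef
    have hψ : ∀ x : ℝ, HasDerivAt (fun x : ℝ => ((x : ℂ) + c)) 1 x := by
      intro x
      simpa using (Complex.ofRealCLM.hasDerivAt (x := x)).add_const c
    have hgy : ContDiff ℝ 1 (fun x : ℝ => f ((x : ℂ) + c)) :=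
      hf.comp ((Complex.ofRealCLM.contDiff).add contDiff_const)
    have hder : ∀ x : ℝ, deriv (fun x : ℝ => f ((x : ℂ) + c)) x
        = fderiv ℝ f ((x : ℂ) + c) 1 := by
      intro x
      have h1 : HasDerivAt (fun x : ℝ => f ((x : ℂ) + c))
          (fderiv ℝ f ((x : ℂ) + c) 1) x := by
        have := (((hf.differentiable one_ne_zero) ((x : ℂ) + c)).hasFDerivAt).comp_hasDerivAt x (hψ x)
        exact this
      exact h1.deriv
    have hd' : ∀ x : ℝ, ‖deriv (fun x : ℝ => f ((x : ℂ) + c)) x‖ ≤ C := by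
      intro x
      rw [hder x]
      refine le_trans ((fderiv ℝ f _).le_opNorm 1) ?_
      rw [norm_one, mul_one]; exact hfd _
    have h2 := ibp1 v hv (fun x : ℝ => f ((x : ℂ) + c)) hgy C (fun x => hfb _) hd'
    simp only [hder] at h2
    simpa only [hφdef, hcdef] using h2
  -- inner integration by parts, second coordinate
  have hinner2 : ∀ x : ℝ, ∫ y, (y : ℂ) * f (φ (x, y)) ∂G
      = (v : ℂ) * ∫ y, fderiv ℝ f (φ (x, y)) Complex.I ∂G := by
    intro x
    set c : ℂ := (x : ℂ) with hcdef
    have hψ : ∀ y : ℝ, HasDerivAt (fun y : ℝ => (c + (y : ℂ) * Complex.I)) Complex.I y := by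
      intro y
      have h0 : HasDerivAt (fun y : ℝ => ((y : ℂ))) 1 y := by
        exact (Complex.ofRealCLM.hasDerivAt (x := y))
      simpa using (h0.mul_const Complex.I).const_add c
    have hgy : ContDiff ℝ 1 (fun y : ℝ => f (c + (y : ℂ) * Complex.I)) :=
      hf.comp (contDiff_const.add ((Complex.ofRealCLM.contDiff).mul contDiff_const))
    have hder : ∀ y : ℝ, deriv (fun y : ℝ => f (c + (y : ℂ) * Complex.I)) y
        = fderiv ℝ f (c + (y : ℂ) * Complex.I) Complex.I := by
      intro y
      have h1 : HasDerivAt (fun y : ℝ => f (c + (y : ℂ) * Complex.I))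
          (fderiv ℝ f (c + (y : ℂ) * Complex.I) Complex.I) y := by
        have := (((hf.differentiable one_ne_zero) _).hasFDerivAt).comp_hasDerivAt y (hψ y)
        exact this
      exact h1.deriv
    have hd' : ∀ y : ℝ, ‖deriv (fun y : ℝ => f (c + (y : ℂ) * Complex.I)) y‖ ≤ C := by
      intro y
      rw [hder y]
      refine le_trans ((fderiv ℝ f _).le_opNorm Complex.I) ?_
      rw [Complex.norm_I, mul_one]; exact hfd _
    have h2 := ibp1 v hv (fun y : ℝ => f (c + (y : ℂ) * Complex.I)) hgy C (fun y => hfb _) hd'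
    simp only [hder] at h2
    simpa only [hφdef, hcdef] using h2
  -- Fubini and assembly
  have ht1 : ∫ p, (p.1 : ℂ) * f (φ p) ∂(G.prod G)
      = (v : ℂ) * ∫ p, fderiv ℝ f (φ p) 1 ∂(G.prod G) := by
    rw [MeasureTheory.integral_prod_symm _ hI1, MeasureTheory.integral_prod_symm _ hI3,
      ← MeasureTheory.integral_const_mul]
    exact integral_congr_ae (Filter.Eventually.of_forall fun y => hinner1 y)
  have ht2 : ∫ p, (p.2 : ℂ) * f (φ p) ∂(G.prod G)
      = (v : ℂ) * ∫ p, fderiv ℝ f (φ p) Complex.I ∂(G.prod G) := by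
    rw [MeasureTheory.integral_prod _ hI2, MeasureTheory.integral_prod _ hI4,
      ← MeasureTheory.integral_const_mul]
    exact integral_congr_ae (Filter.Eventually.of_forall fun x => hinner2 x)
  have hsplit : ∫ p, ((p.1 : ℂ) - (p.2 : ℂ) * Complex.I) * f (φ p) ∂(G.prod G)
      = (∫ p, (p.1 : ℂ) * f (φ p) ∂(G.prod G))
        - Complex.I * ∫ p, (p.2 : ℂ) * f (φ p) ∂(G.prod G) := by
    rw [← MeasureTheory.integral_const_mul, ← MeasureTheory.integral_sub hI1 (hI2.const_mul _)]
    refine integral_congr_ae (Filter.Eventually.of_forall fun p => ?_)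
    ring
  have hfinal : (∫ p, fderiv ℝ f (φ p) 1 ∂(G.prod G))
      - Complex.I * ∫ p, fderiv ℝ f (φ p) Complex.I ∂(G.prod G)
      = 2 * ∫ p, wirtingerDeriv f (φ p) ∂(G.prod G) := by
    rw [← MeasureTheory.integral_const_mul, ← MeasureTheory.integral_const_mul,
      ← MeasureTheory.integral_sub hI3 (hI4.const_mul _)]
    refine integral_congr_ae (Filter.Eventually.of_forall fun p => ?_)
    simp only [wirtingerDeriv]
    ring
  rw [hmapL, hmapR, hsplit, ht1, ht2]
  rw [show ((v : ℂ) * ∫ p, fderiv ℝ f (φ p) 1 ∂(G.prod G))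
      - Complex.I * ((v : ℂ) * ∫ p, fderiv ℝ f (φ p) Complex.I ∂(G.prod G))
      = (v : ℂ) * ((∫ p, fderiv ℝ f (φ p) 1 ∂(G.prod G))
        - Complex.I * ∫ p, fderiv ℝ f (φ p) Complex.I ∂(G.prod G)) from by ring,
    hfinal, hvdef]
  push_cast
  ring
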